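/- If two curves γ and γ₁ are both parameterized along u' (γ' = μ u', γ₁' = μ₁ u') and have the same u-evolute, i.e., γ - μu = γ₁ - μ₁u, then γ₁ is a u-equidistant of γ: there is a constant c with γ₁(θ) = γ(θ) + c·u(θ) for all θ. -/
import Mathlib

open Real

noncomputable def det2 (w₁ w₂ : ℝ × ℝ) : ℝ := w₁.1 * w₂.2 - w₁.2 * w₂.1

lemma hda_fst {f : ℝ → ℝ × ℝ} {v : ℝ × ℝ} {x : ℝ} (h : HasDerivAt f v x) :
    HasDerivAt (fun t => (f t).1) v.1 x := by
  simpa using (h.hasFDerivAt.fst).hasDerivAt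

lemma hda_snd {f : ℝ → ℝ × ℝ} {v : ℝ × ℝ} {x : ℝ} (h : HasDerivAt f v x) :
    HasDerivAt (fun t => (f t).2) v.2 x := by
  simpa using (h.hasFDerivAt.snd).hasDerivAt

theorem same_evolute_equidistant (u u' u'' γ γ₁ : ℝ → ℝ × ℝ) (μ μ₁ : ℝ → ℝ)
    (hu : ∀ θ, HasDerivAt u (u' θ) θ)
    (hu' : ∀ θ, HasDerivAt u' (u'' θ) θ)
    (hdet : ∀ θ, 0 < det2 (u θ) (u' θ))
    (hγ : ∀ θ, HasDerivAt γ (μ θ • u' θ) θ)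
    (hγ₁ : ∀ θ, HasDerivAt γ₁ (μ₁ θ • u' θ) θ)
    (hev : ∀ θ, γ θ - μ θ • u θ = γ₁ θ - μ₁ θ • u θ) :
    ∃ c : ℝ, ∀ θ, γ₁ θ = γ θ + c • u θ := by
  -- difference
  have hc : ∀ θ, γ₁ θ - γ θ = (μ₁ θ - μ θ) • u θ := by
    intro θ
    have := hev θ
    rw [sub_smul]
    have : γ₁ θ = γ θ - μ θ • u θ + μ₁ θ • u θ := by rw [this]; abel
    rw [this]; abel
  set m : ℝ → ℝ := fun θ => μ₁ θ - μ θ with hm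
  set D : ℝ → ℝ := fun θ => det2 (u θ) (u' θ) with hD
  set A : ℝ → ℝ := fun θ => det2 (γ₁ θ - γ θ) (u' θ) with hA
  have hDne : ∀ θ, D θ ≠ 0 := fun θ => (hdet θ).ne'
  have hAm : ∀ θ, A θ = m θ * D θ := by
    intro θ
    show det2 (γ₁ θ - γ θ) (u' θ) = (μ₁ θ - μ θ) * det2 (u θ) (u' θ)
    rw [hc θ]
    simp only [det2, Prod.smul_fst, Prod.smul_snd, smul_eq_mul]
    ring
  set h : ℝ → ℝ := fun θ => A θ / D θ with hh
  have hhm : ∀ θ, h θ = m θ := by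
    intro θ; simp only [hh, hAm θ]
    rw [mul_div_assoc, div_self (hDne θ), mul_one]
  -- derivatives
  have hAder : ∀ θ, HasDerivAt A (m θ * det2 (u θ) (u'' θ)) θ := by
    intro θ
    have h1 : HasDerivAt (fun t => ((γ₁ t).1 - (γ t).1) * (u' t).2
        - ((γ₁ t).2 - (γ t).2) * (u' t).1)
        (((μ₁ θ • u' θ).1 - (μ θ • u' θ).1) * (u' θ).2
          + ((γ₁ θ).1 - (γ θ).1) * (u'' θ).2
          - (((μ₁ θ • u' θ).2 - (μ θ • u' θ).2) * (u' θ).1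
          + ((γ₁ θ).2 - (γ θ).2) * (u'' θ).1)) θ := by
      exact (((hda_fst (hγ₁ θ)).sub (hda_fst (hγ θ))).mul (hda_snd (hu' θ))).sub
        (((hda_snd (hγ₁ θ)).sub (hda_snd (hγ θ))).mul (hda_fst (hu' θ)))
    have heq : (((μ₁ θ • u' θ).1 - (μ θ • u' θ).1) * (u' θ).2
          + ((γ₁ θ).1 - (γ θ).1) * (u'' θ).2
          - (((μ₁ θ • u' θ).2 - (μ θ • u' θ).2) * (u' θ).1
          + ((γ₁ θ).2 - (γ θ).2) * (u'' θ).1)) = m θ * det2 (u θ) (u'' θ) := by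
      have h2 := hc θ
      have h2a : (γ₁ θ).1 - (γ θ).1 = m θ * (u θ).1 := by
        have := congrArg Prod.fst h2; simpa [hm] using this
      have h2b : (γ₁ θ).2 - (γ θ).2 = m θ * (u θ).2 := by
        have := congrArg Prod.snd h2; simpa [hm] using this
      simp only [Prod.smul_fst, Prod.smul_snd, smul_eq_mul, h2a, h2b, det2, hm]
      ring
    rw [← heq]
    exact h1.congr_deriv rfl |>.congr_of_eventuallyEq (by
      filter_upwards with t
      simp [hA, det2, Prod.fst_sub, Prod.snd_sub])
  have hDder : ∀ θ, HasDerivAt D (det2 (u θ) (u'' θ)) θ := by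
    intro θ
    have h1 : HasDerivAt (fun t => (u t).1 * (u' t).2 - (u t).2 * (u' t).1)
        ((u' θ).1 * (u' θ).2 + (u θ).1 * (u'' θ).2
          - ((u' θ).2 * (u' θ).1 + (u θ).2 * (u'' θ).1)) θ :=
      ((hda_fst (hu θ)).mul (hda_snd (hu' θ))).sub
        ((hda_snd (hu θ)).mul (hda_fst (hu' θ)))
    have : ((u' θ).1 * (u' θ).2 + (u θ).1 * (u'' θ).2
          - ((u' θ).2 * (u' θ).1 + (u θ).2 * (u'' θ).1)) = det2 (u θ) (u'' θ) := by
      simp [det2]; ring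
    rw [← this]
    exact h1.congr_of_eventuallyEq (by filter_upwards with t; simp [hD, det2])
  have hhder : ∀ θ, HasDerivAt h 0 θ := by
    intro θ
    have := (hAder θ).div (hDder θ) (hDne θ)
    have hval : (m θ * det2 (u θ) (u'' θ) * D θ - A θ * det2 (u θ) (u'' θ)) / D θ ^ 2 = 0 := by
      rw [hAm θ]; ring
    rw [hval] at this
    exact this
  have hconst : ∀ θ, h θ = h 0 := by
    intro θ
    have : ∀ x : ℝ, deriv h x = 0 := fun x => (hhder x).deriv
    have hdiff : Differentiable ℝ h := fun x => (hhder x).differentiableAt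
    exact is_const_of_deriv_eq_zero hdiff this θ 0
  refine ⟨m 0, fun θ => ?_⟩
  have : m θ = m 0 := by rw [← hhm θ, ← hhm 0, hconst θ]
  have h2 : γ₁ θ - γ θ = m θ • u θ := hc θ
  rw [this] at h2
  rw [← h2]; abel
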